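/- The DCC kernels satisfy Σ_{j=1}^{n} p_{n−j}^{(n)} = tₙ, where tₙ = Σ_{k=1}^{n} τₖ. -/
import Mathlib


open Finset

/-- Proposition 4.1 (first part): the DCC kernels sum to the time level,
`Σ_{j=1}^n p_{n-j}^{(n)} = t_n = Σ_{k=1}^n τ_k`. -/
theorem dcc_sum (τ : ℕ → ℝ) (hτ : ∀ n, 1 ≤ n → 0 < τ n)
    (r : ℕ → ℝ) (hr : ∀ n, 2 ≤ n → r n = τ n / τ (n - 1))
    (b : ℕ → ℕ → ℝ)
    (hb11 : b 1 1 = 1 / τ 1)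
    (hb0 : ∀ n, 2 ≤ n → b n n = (1 + 2 * r n) / (τ n * (1 + r n)))
    (hb1 : ∀ n, 2 ≤ n → b n (n - 1) = -(r n) ^ 2 / (τ n * (1 + r n)))
    (hbz : ∀ n k, k + 2 ≤ n → b n k = 0)
    (p : ℕ → ℕ → ℝ)
    (hp : ∀ k n, 1 ≤ k → k ≤ n → ∑ j ∈ Icc k n, p n j * b j k = 1) :
    ∀ n, 1 ≤ n → ∑ j ∈ Icc 1 n, p n j = ∑ k ∈ Icc 1 n, τ k := by
  -- Key: the BDF2 formula is exact on linear functions: ∑_{k=1}^j b j k * τ k = 1.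
  have key : ∀ j, 1 ≤ j → ∑ k ∈ Icc 1 j, b j k * τ k = 1 := by
    intro j hj
    rcases eq_or_lt_of_le hj with h1 | h2
    · subst_vars
      simp only [Icc_self, sum_singleton, hb11]
      field_simp [(hτ 1 le_rfl).ne']
    · have hj2 : 2 ≤ j := h2
      have hsub : ({j - 1, j} : Finset ℕ) ⊆ Icc 1 j := by
        intro x hx
        simp only [mem_insert, mem_singleton] at hx
        rcases hx with h | h <;> simp [h] <;> omega
      rw [← Finset.sum_subset hsub (by
        intro x hx hx'
        simp only [mem_insert, mem_singleton, not_or] at hx'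
        simp only [mem_Icc] at hx
        have : x + 2 ≤ j := by omega
        simp [hbz j x this])]
      rw [Finset.sum_pair (by omega : j - 1 ≠ j)]
      have ha : 0 < τ (j - 1) := hτ _ (by omega)
      have hb : 0 < τ j := hτ _ (by omega)
      have hrj : r j = τ j / τ (j - 1) := hr j hj2
      have hrpos : 0 < r j := by rw [hrj]; positivity
      rw [hb1 j hj2, hb0 j hj2, hrj]
      have h1 : (1 : ℝ) + τ j / τ (j - 1) > 0 := by positivity
      field_simp
      ring
  intro n hn
  have main : ∑ k ∈ Icc 1 n, τ k = ∑ k ∈ Icc 1 n, ∑ j ∈ Icc k n, τ k * (p n j * b j k) := by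
    refine Finset.sum_congr rfl fun k hk => ?_
    simp only [mem_Icc] at hk
    rw [← Finset.mul_sum, hp k n hk.1 hk.2, mul_one]
  rw [main]
  simp only [← Finset.Ico_add_one_right_eq_Icc]
  rw [Finset.sum_Ico_Ico_comm 1 (n + 1) (fun k j => τ k * (p n j * b j k))]
  refine Finset.sum_congr rfl fun j hj => ?_
  simp only [Finset.mem_Ico] at hj
  have hj1 : 1 ≤ j := hj.1
  refine Eq.symm ?_
  calc ∑ k ∈ Finset.Ico 1 (j + 1), τ k * (p n j * b j k)
      = p n j * ∑ k ∈ Finset.Ico 1 (j + 1), b j k * τ k := by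
        rw [Finset.mul_sum]; exact Finset.sum_congr rfl fun k _ => by ring
    _ = p n j := by rw [Finset.Ico_add_one_right_eq_Icc, key j hj1, mul_one]
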